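/- Let μ be a partition of n+1, and for each injective tableau T of shape μ (bijection from cells of μ to {1,...,n+1}), let (r_{n+1}, c_{n+1}) be the position of entry n+1. Fix distinct scalars ζ_0, ζ_1, ζ_2,... and define the point π(ρ_T) = (ζ_{r_1},...,ζ_{r_{n+1}}) ∈ ℂ^{n+1}, where (r_k, c_k) is the position of entry k. Then the number of distinct points π(ρ_T) over all injective tableaux T with r_{n+1} ≥ i and c_{n+1} ≥ j equals (n!/μ!) Σ_{i' > i, μ_{i'} > j} μ_{i'}. -/

import Mathlib

open Finset

/-- The cells of the diagram of `μ` (0-based coordinates), inside an `N × N` box. -/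
def diagOf (μ : ℕ → ℕ) (N : ℕ) : Finset (ℕ × ℕ) :=
  (Finset.range N ×ˢ Finset.range N).filter fun p => p.2 < μ p.1

/-- Equivalences compatible with fiber maps decompose into fiberwise equivalences. -/
def equivFiberwise {α β ι : Type*} (fa : α → ι) (fb : β → ι) :
    {E : α ≃ β // ∀ a, fb (E a) = fa a} ≃ ∀ i, ({a // fa a = i} ≃ {b // fb b = i}) where
  toFun E i :=
    { toFun := fun a => ⟨E.1 a.1, by rw [E.2]; exact a.2⟩
      invFun := fun b => ⟨E.1.symm b.1, by
        have h := E.2 (E.1.symm b.1)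
        rw [Equiv.apply_symm_apply] at h
        rw [← h]; exact b.2⟩
      left_inv := fun a => Subtype.ext (E.1.symm_apply_apply a.1)
      right_inv := fun b => Subtype.ext (E.1.apply_symm_apply b.1) }
  invFun F := ⟨(Equiv.sigmaFiberEquiv fa).symm.trans
      ((Equiv.sigmaCongrRight F).trans (Equiv.sigmaFiberEquiv fb)), fun a =>
      (F (fa a) ⟨a, rfl⟩).2⟩
  left_inv E := by
    apply Subtype.ext
    ext a
    rfl
  right_inv F := by
    funext i
    apply Equiv.ext
    rintro ⟨x, rfl⟩
    rfl

/-- A subtype defined by a condition on the value of a fibration decomposes as a sigma. -/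
def fiberSigma {α γ : Type*} (f : α → γ) (q : γ → Prop) :
    {x : α // q (f x)} ≃ Σ d : {d : γ // q d}, {x : α // f x = d.1} where
  toFun x := ⟨⟨f x.1, x.2⟩, ⟨x.1, rfl⟩⟩
  invFun p := ⟨p.2.1, by rw [p.2.2]; exact p.1.2⟩
  left_inv x := rfl
  right_inv := by
    rintro ⟨⟨d, hd⟩, x, hx⟩
    dsimp only at hx
    subst hx
    rfl

lemma nat_card_sigma {ι : Type*} [Fintype ι] (f : ι → Type*) [∀ i, Finite (f i)] :
    Nat.card (Σ i, f i) = ∑ i, Nat.card (f i) := by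
  letI : ∀ i, Fintype (f i) := fun i => Fintype.ofFinite _
  simp [Nat.card_eq_fintype_card]

lemma card_compat {α β ι : Type*} [Fintype α] [Fintype β] [Fintype ι]
    [DecidableEq α] [DecidableEq β] [DecidableEq ι]
    (fa : α → ι) (fb : β → ι)
    (h : ∀ i, Nat.card {a // fa a = i} = Nat.card {b // fb b = i}) :
    Nat.card {E : α ≃ β // ∀ a, fb (E a) = fa a}
      = ∏ i, (Nat.card {a // fa a = i}).factorial := by
  rw [Nat.card_congr (equivFiberwise fa fb), Nat.card_pi]
  refine Finset.prod_congr rfl fun i _ => ?_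
  rw [Nat.card_eq_fintype_card, Nat.card_eq_fintype_card,
    Fintype.card_equiv (Fintype.equivOfCardEq
      (by rw [← Nat.card_eq_fintype_card, ← Nat.card_eq_fintype_card, h i]))]

lemma card_dec_true {α : Type*} [Fintype α] [DecidableEq α] (a0 : α) :
    Nat.card {a : α // decide (a = a0) = true} = 1 := by
  rw [Nat.card_eq_fintype_card]
  have : Fintype.card {a : α // decide (a = a0) = true} = Fintype.card {a : α // a = a0} :=
    Fintype.card_congr (Equiv.subtypeEquivRight fun a => by simp)
  rw [this, Fintype.card_subtype_eq]

lemma card_dec_false {α : Type*} [Fintype α] [DecidableEq α] (a0 : α) :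
    Nat.card {a : α // decide (a = a0) = false} = Fintype.card α - 1 := by
  rw [Nat.card_eq_fintype_card]
  have : Fintype.card {a : α // decide (a = a0) = false} = Fintype.card {a : α // ¬ a = a0} :=
    Fintype.card_congr (Equiv.subtypeEquivRight fun a => by simp)
  rw [this, Fintype.card_subtype_compl, Fintype.card_subtype_eq]

lemma card_equiv_fix {α β : Type*} [Fintype α] [Fintype β] [DecidableEq α] [DecidableEq β]
    (a0 : α) (b0 : β) (h : Fintype.card α = Fintype.card β) :
    Nat.card {E : α ≃ β // E a0 = b0} = (Fintype.card α - 1).factorial := by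
  have key : {E : α ≃ β // E a0 = b0}
      ≃ {E : α ≃ β // ∀ a, (decide (E a = b0)) = (decide (a = a0))} := by
    apply Equiv.subtypeEquivRight
    intro E
    constructor
    · intro hE a
      rw [decide_eq_decide]
      constructor
      · intro h1; exact E.injective (h1.trans hE.symm)
      · rintro rfl; exact hE
    · intro hE
      have := hE a0
      rw [decide_eq_decide] at this
      exact this.mpr rfl
  rw [Nat.card_congr key,
    card_compat (fun a => decide (a = a0)) (fun b => decide (b = b0)) (fun i => ?_),
    Fintype.prod_bool]
  · rw [card_dec_true, card_dec_false, Nat.factorial_one, one_mul]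
  · cases i with
    | true => rw [card_dec_true, card_dec_true]
    | false => rw [card_dec_false, card_dec_false, h]

lemma card_filter_prod (s t : Finset ℕ) (q : ℕ × ℕ → Prop) [DecidablePred q] :
    ((s ×ˢ t).filter q).card = ∑ a ∈ s, (t.filter fun b => q (a, b)).card := by
  rw [Finset.card_filter, Finset.sum_product]
  exact Finset.sum_congr rfl fun a _ => (Finset.card_filter _ _).symm

lemma rowblock (N m : ℕ) (hm : m ≤ N) (Q : Prop) [Decidable Q] :
    ((Finset.range N).filter fun c => c < m ∧ Q).card = if Q then m else 0 := by
  split_ifs with hQ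
  · have : ((Finset.range N).filter fun c => c < m ∧ Q) = Finset.range m := by
      ext c; simp only [mem_filter, mem_range]
      constructor
      · rintro ⟨_, h, _⟩; exact h
      · intro h; exact ⟨lt_of_lt_of_le h hm, h, hQ⟩
    rw [this, card_range]
  · have : ((Finset.range N).filter fun c => c < m ∧ Q) = ∅ := by
      ext c; simp only [mem_filter, mem_range, notMem_empty, iff_false]
      rintro ⟨_, _, h⟩; exact hQ h
    rw [this, card_empty]

lemma diag_card (μ : ℕ → ℕ) (N : ℕ) (hμ : ∀ t, μ t ≤ N) :
    (diagOf μ N).card = ∑ t ∈ Finset.range N, μ t := by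
  rw [diagOf, card_filter_prod]
  refine Finset.sum_congr rfl fun t _ => ?_
  have : ((Finset.range N).filter fun c => (t, c).2 < μ (t, c).1)
      = ((Finset.range N).filter fun c => c < μ t ∧ True) := by
    simp
  rw [this, rowblock N (μ t) (hμ t), if_pos trivial]

lemma diag_row_card (μ : ℕ → ℕ) (N : ℕ) (hμ : ∀ t, μ t ≤ N) (r : ℕ) (hr : r < N) :
    ((diagOf μ N).filter fun p => p.1 = r).card = μ r := by
  rw [diagOf, Finset.filter_filter, card_filter_prod]
  have key : ∀ t ∈ Finset.range N,
      ((Finset.range N).filter fun c => (t, c).2 < μ (t, c).1 ∧ (t, c).1 = r).card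
      = if t = r then μ t else 0 := fun t _ => rowblock N (μ t) (hμ t) (t = r)
  rw [Finset.sum_congr rfl key, Finset.sum_ite_eq' (Finset.range N) r μ,
    if_pos (mem_range.mpr hr)]

lemma diag_shadow_card (μ : ℕ → ℕ) (N : ℕ) (hμ : ∀ t, μ t ≤ N) (i j : ℕ) :
    ((diagOf μ N).filter fun p => i ≤ p.1 ∧ j < μ p.1).card
      = ∑ t ∈ (Finset.range N).filter (fun t => i ≤ t ∧ j < μ t), μ t := by
  rw [diagOf, Finset.filter_filter, card_filter_prod]
  have key : ∀ t ∈ Finset.range N,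
      ((Finset.range N).filter fun c =>
        (t, c).2 < μ (t, c).1 ∧ (i ≤ (t, c).1 ∧ j < μ (t, c).1)).card
      = if i ≤ t ∧ j < μ t then μ t else 0 := fun t _ => by
    have := rowblock N (μ t) (hμ t) (i ≤ t ∧ j < μ t)
    convert this using 2
  rw [Finset.sum_congr rfl key, Finset.sum_ite, Finset.sum_const, smul_eq_mul, mul_zero,
    add_zero]

/-- The cells of the diagram as a type. -/
abbrev DT (μ : ℕ → ℕ) (N : ℕ) : Type := {p : ℕ × ℕ // p ∈ diagOf μ N}

/-- The row of a cell, as an element of `Fin N`. -/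
def rowD {μ : ℕ → ℕ} {N : ℕ} (d : DT μ N) : Fin N :=
  ⟨d.1.1, by
    have h := d.2
    simp only [diagOf, Finset.mem_filter, Finset.mem_product, Finset.mem_range] at h
    exact h.1.1⟩

/-- The admissible row-assignments. -/
def Gpred (n : ℕ) (μ : ℕ → ℕ) (i j : ℕ) (g : Fin (n + 1) → Fin (n + 1)) : Prop :=
  (∀ r : Fin (n + 1), Nat.card {k // g k = r} = μ r)
    ∧ i ≤ (g (Fin.last n) : ℕ) ∧ j < μ (g (Fin.last n))

section Main

variable {n : ℕ} {μ : ℕ → ℕ}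

lemma mu_le (hvanish : ∀ t, n + 1 ≤ t → μ t = 0)
    (hsum : ∑ t ∈ Finset.range (n + 1), μ t = n + 1) : ∀ t, μ t ≤ n + 1 := by
  intro t
  by_cases ht : t < n + 1
  · calc μ t ≤ ∑ t ∈ Finset.range (n + 1), μ t :=
        Finset.single_le_sum (fun k _ => Nat.zero_le _) (mem_range.mpr ht)
    _ = n + 1 := hsum
  · rw [hvanish t (not_lt.mp ht)]; exact Nat.zero_le _

lemma Dcard (hvanish : ∀ t, n + 1 ≤ t → μ t = 0)
    (hsum : ∑ t ∈ Finset.range (n + 1), μ t = n + 1) :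
    Fintype.card (DT μ (n + 1)) = n + 1 := by
  rw [Fintype.card_coe, diag_card μ (n + 1) (mu_le hvanish hsum), hsum]

lemma rowD_fiber_card (hvanish : ∀ t, n + 1 ≤ t → μ t = 0)
    (hsum : ∑ t ∈ Finset.range (n + 1), μ t = n + 1) (r : Fin (n + 1)) :
    Nat.card {d : DT μ (n + 1) // rowD d = r} = μ r := by
  have e1 : {d : DT μ (n + 1) // rowD d = r}
      ≃ {p : ℕ × ℕ // p ∈ diagOf μ (n + 1) ∧ p.1 = (r : ℕ)} :=
    (Equiv.subtypeEquivRight fun d => by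
      rw [Fin.ext_iff]; exact Iff.rfl).trans
    (Equiv.subtypeSubtypeEquivSubtypeInter (fun p : ℕ × ℕ => p ∈ diagOf μ (n + 1))
      (fun p => p.1 = (r : ℕ)))
  have e2 : {p : ℕ × ℕ // p ∈ diagOf μ (n + 1) ∧ p.1 = (r : ℕ)}
      ≃ {p : ℕ × ℕ // p ∈ (diagOf μ (n + 1)).filter fun p => p.1 = (r : ℕ)} :=
    Equiv.subtypeEquivRight fun p => by rw [Finset.mem_filter]
  rw [Nat.card_congr (e1.trans e2), Nat.card_eq_fintype_card, Fintype.card_coe,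
    diag_row_card μ (n + 1) (mu_le hvanish hsum) r r.isLt]

lemma shadow_card (hvanish : ∀ t, n + 1 ≤ t → μ t = 0)
    (hsum : ∑ t ∈ Finset.range (n + 1), μ t = n + 1) (i j : ℕ) :
    Nat.card {d : DT μ (n + 1) // i ≤ d.1.1 ∧ j < μ d.1.1}
      = ∑ t ∈ (Finset.range (n + 1)).filter (fun t => i ≤ t ∧ j < μ t), μ t := by
  have e1 : {d : DT μ (n + 1) // i ≤ d.1.1 ∧ j < μ d.1.1}
      ≃ {p : ℕ × ℕ // p ∈ diagOf μ (n + 1) ∧ (i ≤ p.1 ∧ j < μ p.1)} :=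
    Equiv.subtypeSubtypeEquivSubtypeInter (fun p : ℕ × ℕ => p ∈ diagOf μ (n + 1))
      (fun p => i ≤ p.1 ∧ j < μ p.1)
  have e2 : {p : ℕ × ℕ // p ∈ diagOf μ (n + 1) ∧ (i ≤ p.1 ∧ j < μ p.1)}
      ≃ {p : ℕ × ℕ // p ∈ (diagOf μ (n + 1)).filter fun p => i ≤ p.1 ∧ j < μ p.1} :=
    Equiv.subtypeEquivRight fun p => by rw [Finset.mem_filter]
  rw [Nat.card_congr (e1.trans e2), Nat.card_eq_fintype_card, Fintype.card_coe,
    diag_shadow_card μ (n + 1) (mu_le hvanish hsum) i j]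

lemma rowfib_of_equiv (E : Fin (n + 1) ≃ DT μ (n + 1)) (r : Fin (n + 1)) :
    Nat.card {k // rowD (E k) = r} = Nat.card {d : DT μ (n + 1) // rowD d = r} :=
  Nat.card_congr (Equiv.subtypeEquiv E (fun k => Iff.rfl))

/-- Key counting identity. -/
lemma count_key (hvanish : ∀ t, n + 1 ≤ t → μ t = 0)
    (hsum : ∑ t ∈ Finset.range (n + 1), μ t = n + 1) (i j : ℕ) :
    Nat.card {g : Fin (n + 1) → Fin (n + 1) // Gpred n μ i j g}
        * (∏ t ∈ range (n + 1), (μ t).factorial)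
      = (∑ t ∈ (Finset.range (n + 1)).filter (fun t => i ≤ t ∧ j < μ t), μ t)
          * n.factorial := by
  classical
  -- the big set of equivs with condition on the image of `Fin.last n`
  have hb : Nat.card {E : Fin (n + 1) ≃ DT μ (n + 1) //
        Gpred n μ i j (fun k => rowD (E k))}
      = Nat.card {g : Fin (n + 1) → Fin (n + 1) // Gpred n μ i j g}
          * (∏ t ∈ range (n + 1), (μ t).factorial) := by
    refine (Nat.card_congr (fiberSigma
      (fun E : Fin (n + 1) ≃ DT μ (n + 1) => (fun k => rowD (E k)))
      (Gpred n μ i j))).trans ?_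
    rw [nat_card_sigma]
    have hfib : ∀ g : {g : Fin (n + 1) → Fin (n + 1) // Gpred n μ i j g},
        Nat.card {E : Fin (n + 1) ≃ DT μ (n + 1) // (fun k => rowD (E k)) = g.1}
          = ∏ t ∈ range (n + 1), (μ t).factorial := by
      intro g
      have hcnt : ∀ r : Fin (n + 1),
          Nat.card {k // g.1 k = r} = Nat.card {d : DT μ (n + 1) // rowD d = r} := by
        intro r
        rw [g.2.1 r, rowD_fiber_card hvanish hsum r]
      refine (Nat.card_congr (Equiv.subtypeEquivRight fun E => funext_iff)).trans ?_
      refine (card_compat g.1 rowD hcnt).trans ?_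
      rw [← Fin.prod_univ_eq_prod_range (fun t => (μ t).factorial) (n + 1)]
      exact Finset.prod_congr rfl fun r _ => by rw [g.2.1 r]
    rw [Finset.sum_congr rfl (fun g _ => hfib g), Finset.sum_const, smul_eq_mul,
      Finset.card_univ, ← Nat.card_eq_fintype_card]
  have ha : Nat.card {E : Fin (n + 1) ≃ DT μ (n + 1) //
        Gpred n μ i j (fun k => rowD (E k))}
      = (∑ t ∈ (Finset.range (n + 1)).filter (fun t => i ≤ t ∧ j < μ t), μ t)
          * n.factorial := by
    have hP : ∀ E : Fin (n + 1) ≃ DT μ (n + 1),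
        Gpred n μ i j (fun k => rowD (E k))
          ↔ (fun d : DT μ (n + 1) => i ≤ d.1.1 ∧ j < μ d.1.1) (E (Fin.last n)) := by
      intro E
      constructor
      · intro h; exact h.2
      · intro h
        exact ⟨fun r => (rowfib_of_equiv E r).trans (rowD_fiber_card hvanish hsum r),
          h.1, h.2⟩
    refine (Nat.card_congr (Equiv.subtypeEquivRight hP)).trans ?_
    refine (Nat.card_congr (fiberSigma (fun E : Fin (n + 1) ≃ DT μ (n + 1) =>
      E (Fin.last n)) (fun d : DT μ (n + 1) => i ≤ d.1.1 ∧ j < μ d.1.1))).trans ?_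
    rw [nat_card_sigma]
    have hfib : ∀ d : {d : DT μ (n + 1) // i ≤ d.1.1 ∧ j < μ d.1.1},
        Nat.card {E : Fin (n + 1) ≃ DT μ (n + 1) // E (Fin.last n) = d.1}
          = n.factorial := by
      intro d
      rw [card_equiv_fix (Fin.last n) d.1
        (by rw [Fintype.card_fin, Dcard hvanish hsum]), Fintype.card_fin,
        Nat.add_sub_cancel]
    rw [Finset.sum_congr rfl (fun d _ => hfib d), Finset.sum_const, smul_eq_mul,
      Finset.card_univ, ← Nat.card_eq_fintype_card, shadow_card hvanish hsum i j]
  rw [← hb, ha]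

end Main

lemma card_S (hvanish : ∀ t, n + 1 ≤ t → μ t = 0)
    (hsum : ∑ t ∈ Finset.range (n + 1), μ t = n + 1) (i j : ℕ)
    (ζ : ℕ → ℂ) (hζ : Function.Injective ζ) :
    Nat.card {f : Fin (n + 1) → ℂ | ∃ P : Fin (n + 1) → ℕ × ℕ,
        Function.Injective P ∧ (∀ k, P k ∈ diagOf μ (n + 1)) ∧
        (∀ p ∈ diagOf μ (n + 1), ∃ k, P k = p) ∧
        i ≤ (P (Fin.last n)).1 ∧ j ≤ (P (Fin.last n)).2 ∧
        f = fun k => ζ (P k).1}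
      = Nat.card {g : Fin (n + 1) → Fin (n + 1) // Gpred n μ i j g} := by
  have hmem : ∀ g : {g : Fin (n + 1) → Fin (n + 1) // Gpred n μ i j g},
      (fun k => ζ ((g.1 k : ℕ))) ∈ {f : Fin (n + 1) → ℂ | ∃ P : Fin (n + 1) → ℕ × ℕ,
        Function.Injective P ∧ (∀ k, P k ∈ diagOf μ (n + 1)) ∧
        (∀ p ∈ diagOf μ (n + 1), ∃ k, P k = p) ∧
        i ≤ (P (Fin.last n)).1 ∧ j ≤ (P (Fin.last n)).2 ∧
        f = fun k => ζ (P k).1} := by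
    rintro ⟨g, hg1, hg2, hg3⟩
    simp only [Set.mem_setOf_eq]
    -- a compatible bijection of cells
    have F : ∀ r : Fin (n + 1), ({k // g k = r} ≃ {d : DT μ (n + 1) // rowD d = r}) :=
      fun r => Fintype.equivOfCardEq (by
        rw [← Nat.card_eq_fintype_card, ← Nat.card_eq_fintype_card, hg1 r,
          rowD_fiber_card hvanish hsum r])
    have E0 : {E : Fin (n + 1) ≃ DT μ (n + 1) // ∀ k, rowD (E k) = g k} :=
      (equivFiberwise g rowD).symm F
    have hc0 : (((g (Fin.last n) : ℕ)), μ (g (Fin.last n)) - 1) ∈ diagOf μ (n + 1) := by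
      have h1 := (g (Fin.last n)).isLt
      have h2 := mu_le hvanish hsum ((g (Fin.last n) : ℕ))
      simp only [diagOf, mem_filter, mem_product, mem_range]
      omega
    set c0 : DT μ (n + 1) := ⟨(((g (Fin.last n) : ℕ)), μ (g (Fin.last n)) - 1), hc0⟩
      with hc0def
    set E' : Fin (n + 1) ≃ DT μ (n + 1) :=
      E0.1.trans (Equiv.swap (E0.1 (Fin.last n)) c0) with hE'
    have hrowE' : ∀ k, ((E' k).1.1) = (g k : ℕ) := by
      intro k
      show ((Equiv.swap (E0.1 (Fin.last n)) c0 (E0.1 k)).1.1) = (g k : ℕ)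
      rcases eq_or_ne (E0.1 k) (E0.1 (Fin.last n)) with h | h
      · have hk : k = Fin.last n := E0.1.injective h
        rw [h, Equiv.swap_apply_left]
        subst hk; rfl
      · rcases eq_or_ne (E0.1 k) c0 with h2 | h2
        · rw [h2, Equiv.swap_apply_right]
          have ha : ((E0.1 (Fin.last n)).1.1) = (g (Fin.last n) : ℕ) :=
            congrArg Fin.val (E0.2 (Fin.last n))
          have hb : ((E0.1 k).1.1) = (g k : ℕ) := congrArg Fin.val (E0.2 k)
          have hcc : ((E0.1 k).1.1) = (g (Fin.last n) : ℕ) := by rw [h2]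
          rw [ha, ← hcc, hb]
        · rw [Equiv.swap_apply_of_ne_of_ne h h2]
          exact congrArg Fin.val (E0.2 k)
    have hlast : E' (Fin.last n) = c0 := by
      show Equiv.swap (E0.1 (Fin.last n)) c0 (E0.1 (Fin.last n)) = c0
      exact Equiv.swap_apply_left _ _
    refine ⟨fun k => (E' k).1, ?_, fun k => (E' k).2, ?_, ?_, ?_, ?_⟩
    · exact fun a b hab => E'.injective (Subtype.ext hab)
    · intro p hp
      exact ⟨E'.symm ⟨p, hp⟩, congrArg Subtype.val (E'.apply_symm_apply ⟨p, hp⟩)⟩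
    · show i ≤ ((E' (Fin.last n) : ℕ × ℕ)).1
      rw [hlast]; exact hg2
    · show j ≤ ((E' (Fin.last n) : ℕ × ℕ)).2
      rw [hlast]; show j ≤ μ (g (Fin.last n)) - 1; omega
    · funext k; rw [hrowE' k]
  set φ : {g : Fin (n + 1) → Fin (n + 1) // Gpred n μ i j g} →
      {f : Fin (n + 1) → ℂ | ∃ P : Fin (n + 1) → ℕ × ℕ,
        Function.Injective P ∧ (∀ k, P k ∈ diagOf μ (n + 1)) ∧
        (∀ p ∈ diagOf μ (n + 1), ∃ k, P k = p) ∧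
        i ≤ (P (Fin.last n)).1 ∧ j ≤ (P (Fin.last n)).2 ∧
        f = fun k => ζ (P k).1} := fun g => ⟨fun k => ζ ((g.1 k : ℕ)), hmem g⟩ with hφ
  refine (Nat.card_eq_of_bijective φ ⟨?_, ?_⟩).symm
  · intro a b hab
    apply Subtype.ext
    funext k
    have h2 : ζ ((a.1 k : ℕ)) = ζ ((b.1 k : ℕ)) :=
      congrFun (congrArg Subtype.val hab) k
    exact Fin.val_injective (hζ h2)
  · rintro ⟨f, P, hInj, hMem, hSurj, hi, hj, hf⟩
    have hbound : ∀ k, (P k).1 < n + 1 := by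
      intro k
      have h := hMem k
      simp only [diagOf, mem_filter, mem_product, mem_range] at h
      exact h.1.1
    set g : Fin (n + 1) → Fin (n + 1) := fun k => ⟨(P k).1, hbound k⟩ with hgdef
    have hμP : ∀ k, (P k).2 < μ ((P k).1) := by
      intro k
      have h := hMem k
      simp only [diagOf, mem_filter, mem_product, mem_range] at h
      exact h.2
    have hGg : Gpred n μ i j g := by
      refine ⟨fun r => ?_, hi, ?_⟩
      · rw [Nat.card_eq_fintype_card, Fintype.card_subtype]
        have hcards : (Finset.univ.filter fun k => g k = r).card
            = ((diagOf μ (n + 1)).filter fun p => p.1 = (r : ℕ)).card := by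
          refine Finset.card_nbij (fun k => P k) ?_ ?_ ?_
          · intro k hk
            rw [Finset.mem_coe, mem_filter] at hk ⊢
            exact ⟨hMem k, congrArg Fin.val hk.2⟩
          · intro a _ b _ h
            exact hInj h
          · intro p hp
            simp only [Finset.coe_filter, Set.mem_setOf_eq] at hp
            obtain ⟨k, hk⟩ := hSurj p hp.1
            refine ⟨k, ?_, hk⟩
            simp only [Finset.coe_filter, Set.mem_setOf_eq]
            exact ⟨mem_univ _, Fin.ext (by rw [← hp.2, ← hk])⟩
        rw [hcards, diag_row_card μ (n + 1) (mu_le hvanish hsum) (r : ℕ) r.isLt]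
      · show j < μ ((P (Fin.last n)).1)
        exact lt_of_le_of_lt hj (hμP (Fin.last n))
    refine ⟨⟨g, hGg⟩, ?_⟩
    apply Subtype.ext
    show (fun k => ζ ((g k : ℕ))) = f
    rw [hf]

/-- the number of distinct points `π(ρ_T) = (ζ_{r_1},…,ζ_{r_{n+1}})`,
over the injective tableaux `T` of shape `μ ⊢ n+1` (given by the position map `P` of
the entries, entry `n+1` corresponding to `Fin.last n`) whose entry `n+1` lies in the
shadow of `(i,j)`, equals `(n!/μ!) Σ_{i' > i, μ_{i'} > j} μ_{i'}`. -/
theorem stmt18 (n : ℕ) (μ : ℕ → ℕ) (hmono : Antitone μ)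
    (hvanish : ∀ t, n + 1 ≤ t → μ t = 0)
    (hsum : ∑ t ∈ Finset.range (n + 1), μ t = n + 1)
    (i j : ℕ) (hij : j < μ i)
    (ζ : ℕ → ℂ) (hζ : Function.Injective ζ) :
    (Nat.card {f : Fin (n + 1) → ℂ | ∃ P : Fin (n + 1) → ℕ × ℕ,
        Function.Injective P ∧ (∀ k, P k ∈ diagOf μ (n + 1)) ∧
        (∀ p ∈ diagOf μ (n + 1), ∃ k, P k = p) ∧
        i ≤ (P (Fin.last n)).1 ∧ j ≤ (P (Fin.last n)).2 ∧
        f = fun k => ζ (P k).1} : ℚ) =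
      (n.factorial : ℚ) / ((∏ t ∈ Finset.range (n + 1), (μ t).factorial : ℕ) : ℚ) *
        ∑ t ∈ (Finset.range (n + 1)).filter (fun t => i ≤ t ∧ j < μ t), (μ t : ℚ) := by
  rw [card_S hvanish hsum i j ζ hζ]
  have key := count_key (μ := μ) hvanish hsum i j
  have hM : ((∏ t ∈ Finset.range (n + 1), (μ t).factorial : ℕ) : ℚ) ≠ 0 :=
    Nat.cast_ne_zero.mpr (Finset.prod_pos fun t _ => Nat.factorial_pos (μ t)).ne'
  have key' : (Nat.card {g : Fin (n + 1) → Fin (n + 1) // Gpred n μ i j g} : ℚ)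
      * ((∏ t ∈ Finset.range (n + 1), (μ t).factorial : ℕ) : ℚ)
      = (∑ t ∈ (Finset.range (n + 1)).filter (fun t => i ≤ t ∧ j < μ t), (μ t : ℚ))
        * (n.factorial : ℚ) := by
    exact_mod_cast congrArg (Nat.cast : ℕ → ℚ) key
  push_cast at key'
  field_simp
  push_cast
  linear_combination key'
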